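/- Let a > b > 0, c = √(a² − b²), δ₁ = √(4a² − b²), O = (0, −c·δ₁/b) and R = 2a²/b. Let A, B, C ∈ ℝ² be noncollinear, each at distance R from O, with each of the three sidelines AB, BC, CA tangent to E(a, b), and let G = (A + B + C)/3 be the centroid. If u, v ∈ ℝ² are orthonormal vectors and p ≥ q > 0 are such that A, B, C all lie on the ellipse {x ∈ ℝ² : ⟨x − G, u⟩²/p² + ⟨x − G, v⟩²/q² = 1} (the Steiner circumellipse, with semi-axes p, q), then p²/q² = (8a² − 5b² + 4√(4a⁴ − 5a²b² + b⁴))/(3b²); in particular the aspect ratio of the Steiner circumellipse is the same for every triangle of the Brocard-porism family. -/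

import Mathlib

open Real RealInnerProductSpace

/-- A point of the Euclidean plane `ℝ²`. -/
noncomputable def pt (x y : ℝ) : EuclideanSpace ℝ (Fin 2) := WithLp.toLp 2 ![x, y]

/-- The ellipse with semi-axes `p, q` centered at the origin. -/
def ellipse (p q : ℝ) : Set (EuclideanSpace ℝ (Fin 2)) :=
  {z | z 0 ^ 2 / p ^ 2 + z 1 ^ 2 / q ^ 2 = 1}

/-- The line through two points, as a subset of the plane. -/
noncomputable def lineThrough (A B : EuclideanSpace ℝ (Fin 2)) :
    Set (EuclideanSpace ℝ (Fin 2)) :=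
  (affineSpan ℝ {A, B} : AffineSubspace ℝ (EuclideanSpace ℝ (Fin 2)))

/-- A line is tangent to a conic if they intersect in exactly one point. -/
def IsTangent (L E : Set (EuclideanSpace ℝ (Fin 2))) : Prop := ∃ p, L ∩ E = {p}

lemma tangent_poly (a b : ℝ) (ha : 0 < a) (hb : 0 < b) (X Y : EuclideanSpace ℝ (Fin 2))
    (hXY : X ≠ Y) (ht : IsTangent (lineThrough X Y) (ellipse a b)) :
    a ^ 2 * (Y 1 - X 1) ^ 2 + b ^ 2 * (Y 0 - X 0) ^ 2 = (X 0 * Y 1 - X 1 * Y 0) ^ 2 := by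
  obtain ⟨P, hP⟩ := ht
  set d0 : ℝ := Y 0 - X 0 with hd0
  set d1 : ℝ := Y 1 - X 1 with hd1
  set α : ℝ := b ^ 2 * d0 ^ 2 + a ^ 2 * d1 ^ 2 with hα
  set β : ℝ := 2 * (b ^ 2 * X 0 * d0 + a ^ 2 * X 1 * d1) with hβ
  set γ : ℝ := b ^ 2 * X 0 ^ 2 + a ^ 2 * X 1 ^ 2 - a ^ 2 * b ^ 2 with hγ
  have ha2 : a ^ 2 ≠ 0 := by positivity
  have hb2 : b ^ 2 ≠ 0 := by positivity
  -- d ≠ 0 at some coordinate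
  have hdne : d0 ≠ 0 ∨ d1 ≠ 0 := by
    by_contra hcon
    push_neg at hcon
    apply hXY
    have hsub : Y - X = 0 := by
      ext i
      fin_cases i
      · simpa [PiLp.sub_apply] using hcon.1
      · simpa [PiLp.sub_apply] using hcon.2
    exact (sub_eq_zero.mp hsub).symm
  have hαpos : 0 < α := by
    rcases hdne with h | h
    · have : 0 < b ^ 2 * d0 ^ 2 := by positivity
      nlinarith [sq_nonneg (a * d1)]
    · have : 0 < a ^ 2 * d1 ^ 2 := by positivity
      nlinarith [sq_nonneg (b * d0)]
  -- membership in line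
  have memline : ∀ t : ℝ, (X + t • (Y - X)) ∈ lineThrough X Y := by
    intro t
    rw [lineThrough, AffineSubspace.mem_coe]
    have := AffineMap.lineMap_mem_affineSpan_pair t X Y
    convert this using 1
    simp [AffineMap.lineMap_apply, vsub_eq_sub, vadd_eq_add]
    abel
  have coord : ∀ (t : ℝ) (i : Fin 2), (X + t • (Y - X)) i = X i + t * (Y i - X i) := by
    intro t i; simp [PiLp.add_apply, PiLp.smul_apply, PiLp.sub_apply]
  -- membership in ellipse iff quadratic
  have memell : ∀ t : ℝ, (X + t • (Y - X)) ∈ ellipse a b ↔ α * t ^ 2 + β * t + γ = 0 := by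
    intro t
    rw [ellipse, Set.mem_setOf_eq, coord t 0, coord t 1, ← hd0, ← hd1]
    constructor
    · intro h
      have h2 : ((X 0 + t * d0) ^ 2 * b ^ 2 + (X 1 + t * d1) ^ 2 * a ^ 2) = a ^ 2 * b ^ 2 := by
        field_simp at h
        linarith [h]
      linear_combination h2
    · intro h
      field_simp
      linear_combination b ^ 2 * a ^ 2 + h
  -- the unique point P gives t₀
  have hPl : P ∈ lineThrough X Y ∩ ellipse a b := hP ▸ rfl
  obtain ⟨t₀, ht₀⟩ : ∃ t : ℝ, X + t • (Y - X) = P := by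
    have h := hPl.1
    rw [lineThrough, AffineSubspace.mem_coe] at h
    have h2 : P -ᵥ X ∈ (affineSpan ℝ ({X, Y} : Set (EuclideanSpace ℝ (Fin 2)))).direction :=
      AffineSubspace.vsub_right_mem_direction_iff_mem (left_mem_affineSpan_pair ℝ X Y) P |>.2 h
    rw [direction_affineSpan, vectorSpan_pair_rev] at h2
    obtain ⟨t, ht2⟩ := Submodule.mem_span_singleton.mp h2
    refine ⟨t, ?_⟩
    have h3 : P - X = t • (Y - X) := by simpa [vsub_eq_sub] using ht2.symm
    rw [← h3]; abel
  have hq0 : α * t₀ ^ 2 + β * t₀ + γ = 0 := (memell t₀).1 (by rw [ht₀]; exact hPl.2)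
  -- key: 2αt₀ + β = 0
  have hlin : 2 * α * t₀ + β = 0 := by
    by_contra hs
    set t₁ : ℝ := -(β + α * t₀) / α with ht1def
    have ht1 : α * t₁ = -(β + α * t₀) := by
      rw [ht1def]
      field_simp
    have hq1α : α * (α * t₁ ^ 2 + β * t₁ + γ) = 0 := by
      linear_combination (α * t₁ - α * t₀) * ht1 + α * hq0
    have hq1 : α * t₁ ^ 2 + β * t₁ + γ = 0 := by
      rcases mul_eq_zero.mp hq1α with h | h
      · exact absurd h hαpos.ne'
      · exact h
    have hne : t₁ ≠ t₀ := by
      intro hcon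
      apply hs
      rw [hcon] at ht1
      linarith
    have hmem1 : (X + t₁ • (Y - X)) ∈ lineThrough X Y ∩ ellipse a b :=
      ⟨memline t₁, (memell t₁).2 hq1⟩
    have hmem0 : (X + t₀ • (Y - X)) ∈ lineThrough X Y ∩ ellipse a b :=
      ⟨memline t₀, (memell t₀).2 hq0⟩
    rw [hP] at hmem1 hmem0
    have : X + t₁ • (Y - X) = X + t₀ • (Y - X) := by
      rw [Set.mem_singleton_iff] at hmem1 hmem0
      rw [hmem1, hmem0]
    have heq : t₁ = t₀ := by
      rcases hdne with hd | hd
      · have h0 : (X + t₁ • (Y - X)) 0 = (X + t₀ • (Y - X)) 0 := by rw [this]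
        rw [coord t₁ 0, coord t₀ 0, ← hd0] at h0
        have : t₁ * d0 = t₀ * d0 := by linarith
        exact mul_right_cancel₀ hd this
      · have h0 : (X + t₁ • (Y - X)) 1 = (X + t₀ • (Y - X)) 1 := by rw [this]
        rw [coord t₁ 1, coord t₀ 1, ← hd1] at h0
        have : t₁ * d1 = t₀ * d1 := by linarith
        exact mul_right_cancel₀ hd this
    exact hne heq
  -- discriminant zero
  have hdisc : β ^ 2 - 4 * α * γ = 0 := by
    linear_combination (β + 2 * α * t₀) * hlin - 4 * α * hq0
  -- expand
  rw [hβ, hγ, hα, hd0, hd1] at hdisc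
  have hfin : 4 * a ^ 2 * b ^ 2 *
      (a ^ 2 * (Y 1 - X 1) ^ 2 + b ^ 2 * (Y 0 - X 0) ^ 2 - (X 0 * Y 1 - X 1 * Y 0) ^ 2) = 0 := by
    linear_combination hdisc
  have h4 : (4 : ℝ) * a ^ 2 * b ^ 2 ≠ 0 := by positivity
  have := mul_eq_zero.mp hfin
  rcases this with h | h
  · exact absurd h h4
  · rw [hd0, hd1]
    linarith

lemma collinear_of_det_zero (A B C : EuclideanSpace ℝ (Fin 2))
    (h : (B 0 - A 0) * (C 1 - A 1) - (B 1 - A 1) * (C 0 - A 0) = 0) :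
    Collinear ℝ ({A, B, C} : Set (EuclideanSpace ℝ (Fin 2))) := by
  rw [collinear_iff_exists_forall_eq_smul_vadd]
  by_cases hAB : B = A
  · refine ⟨A, C - A, ?_⟩
    intro P hP
    simp only [Set.mem_insert_iff, Set.mem_singleton_iff] at hP
    rcases hP with h1 | h1 | h1
    · exact ⟨0, by simp [h1]⟩
    · exact ⟨0, by simp [h1, hAB]⟩
    · exact ⟨1, by rw [h1, one_smul, vadd_eq_add]; abel⟩
  · have hd : B 0 - A 0 ≠ 0 ∨ B 1 - A 1 ≠ 0 := by
      by_contra hcon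
      push_neg at hcon
      apply hAB
      have : B - A = 0 := by
        ext i; fin_cases i
        · simpa [PiLp.sub_apply] using hcon.1
        · simpa [PiLp.sub_apply] using hcon.2
      exact sub_eq_zero.mp this
    have key : ∃ μ : ℝ, C - A = μ • (B - A) := by
      rcases hd with hd | hd
      · refine ⟨(C 0 - A 0)/(B 0 - A 0), ?_⟩
        ext i; fin_cases i
        · show C 0 - A 0 = (C 0 - A 0)/(B 0 - A 0) * (B 0 - A 0)
          field_simp
        · show C 1 - A 1 = (C 0 - A 0)/(B 0 - A 0) * (B 1 - A 1)
          field_simp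
          linear_combination h
      · refine ⟨(C 1 - A 1)/(B 1 - A 1), ?_⟩
        ext i; fin_cases i
        · show C 0 - A 0 = (C 1 - A 1)/(B 1 - A 1) * (B 0 - A 0)
          field_simp
          linear_combination -h
        · show C 1 - A 1 = (C 1 - A 1)/(B 1 - A 1) * (B 1 - A 1)
          field_simp
    obtain ⟨μ, hμ⟩ := key
    refine ⟨A, B - A, ?_⟩
    intro P hP
    simp only [Set.mem_insert_iff, Set.mem_singleton_iff] at hP
    rcases hP with h1 | h1 | h1
    · exact ⟨0, by simp [h1]⟩
    · exact ⟨1, by rw [h1, one_smul, vadd_eq_add]; abel⟩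
    · refine ⟨μ, ?_⟩
      rw [h1, vadd_eq_add, ← hμ]
      abel

set_option maxHeartbeats 4000000 in
/-- Over the Brocard porism, the Steiner circumellipse (the ellipse centered at the
centroid `G` through the three vertices, with semi-axes `p ≥ q` in the orthonormal
directions `u, v`) has invariant squared aspect ratio
`p²/q² = (8a² − 5b² + 4√(4a⁴ − 5a²b² + b⁴))/(3b²)`. -/
theorem brocard_porism_steiner_aspect_ratio (a b c δ₁ R : ℝ) (hab : a > b) (hb : 0 < b)
    (hc : c = Real.sqrt (a ^ 2 - b ^ 2)) (hδ : δ₁ = Real.sqrt (4 * a ^ 2 - b ^ 2))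
    (hR : R = 2 * a ^ 2 / b)
    (O : EuclideanSpace ℝ (Fin 2)) (hO : O = pt 0 (-(c * δ₁ / b)))
    (A B C : EuclideanSpace ℝ (Fin 2))
    (hncol : ¬ Collinear ℝ ({A, B, C} : Set (EuclideanSpace ℝ (Fin 2))))
    (hA : dist A O = R) (hB : dist B O = R) (hC : dist C O = R)
    (tAB : IsTangent (lineThrough A B) (ellipse a b))
    (tBC : IsTangent (lineThrough B C) (ellipse a b))
    (tCA : IsTangent (lineThrough C A) (ellipse a b))
    (G : EuclideanSpace ℝ (Fin 2)) (hG : G = (3 : ℝ)⁻¹ • (A + B + C))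
    (u v : EuclideanSpace ℝ (Fin 2))
    (hu : ‖u‖ = 1) (hv : ‖v‖ = 1) (huv : ⟪u, v⟫ = 0)
    (p q : ℝ) (hpq : p ≥ q) (hq : 0 < q)
    (hSteiner : ∀ X ∈ ({A, B, C} : Set (EuclideanSpace ℝ (Fin 2))),
      ⟪X - G, u⟫ ^ 2 / p ^ 2 + ⟪X - G, v⟫ ^ 2 / q ^ 2 = 1) :
    p ^ 2 / q ^ 2 =
      (8 * a ^ 2 - 5 * b ^ 2 +
        4 * Real.sqrt (4 * a ^ 4 - 5 * a ^ 2 * b ^ 2 + b ^ 4)) / (3 * b ^ 2) := by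

  -- basic parameter facts
  have hb0 : b ≠ 0 := ne_of_gt hb
  have ha : (0:ℝ) < a := lt_trans hb hab
  have hab2 : (0:ℝ) < a^2 - b^2 := by nlinarith
  have hab4 : (0:ℝ) < 4*a^2 - b^2 := by nlinarith
  have hc2 : c^2 = a^2 - b^2 := by rw [hc]; exact Real.sq_sqrt (le_of_lt hab2)
  have hcpos : (0:ℝ) < c := by rw [hc]; exact Real.sqrt_pos.2 hab2
  have hd2 : δ₁^2 = 4*a^2 - b^2 := by rw [hδ]; exact Real.sq_sqrt (le_of_lt hab4)
  have hdpos : (0:ℝ) < δ₁ := by rw [hδ]; exact Real.sqrt_pos.2 hab4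
  set k : ℝ := c * δ₁ / b with hkdef
  have hkb : k * b = c * δ₁ := by rw [hkdef]; field_simp
  have hk : b^2 * k^2 = (a^2 - b^2) * (4*a^2 - b^2) := by
    have h1 : (k*b)^2 = (c*δ₁)^2 := by rw [hkb]
    linear_combination h1 + δ₁^2 * hc2 + (a^2 - b^2) * hd2
  have hO0 : O 0 = 0 := by rw [hO]; simp [pt]
  have hO1 : O 1 = -k := by rw [hO, hkdef]; simp [pt]
  -- circle equations
  have circ : ∀ X : EuclideanSpace ℝ (Fin 2), dist X O = R →
      (X 0)^2 + (X 1)^2 + 2*k*(X 1) - 5*a^2 + b^2 = 0 := by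
    intro X hX
    have h1 : dist X O^2 = R^2 := by rw [hX]
    rw [EuclideanSpace.dist_eq, Real.sq_sqrt (by positivity)] at h1
    simp only [Fin.sum_univ_two, Real.dist_eq, sq_abs] at h1
    rw [hO0, hO1, hR] at h1
    have h2 : b^2 * ((X 0)^2 + (X 1)^2 + 2*k*(X 1) - 5*a^2 + b^2) = 0 := by
      have h3 : b^2 * ((X 0 - 0)^2 + (X 1 - -k)^2) = b^2 * (2*a^2/b)^2 := by rw [h1]
      have h4 : b^2 * (2*a^2/b)^2 = 4*a^4 := by field_simp; ring
      rw [h4] at h3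
      linear_combination h3 - hk
    rcases mul_eq_zero.mp h2 with h | h
    · exact absurd h (by positivity)
    · exact h
  have hgA := circ A hA
  have hgB := circ B hB
  have hgC := circ C hC
  -- distinctness
  have hABne : A ≠ B := by
    intro h
    apply hncol
    have : ({A, B, C} : Set (EuclideanSpace ℝ (Fin 2))) = {B, C} := by
      rw [h]; simp
    rw [this]; exact collinear_pair ℝ B C
  have hBCne : B ≠ C := by
    intro h
    apply hncol
    have : ({A, B, C} : Set (EuclideanSpace ℝ (Fin 2))) = {A, C} := by
      rw [h]; simp
    rw [this]; exact collinear_pair ℝ A C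
  have hCAne : C ≠ A := by
    intro h
    apply hncol
    have : ({A, B, C} : Set (EuclideanSpace ℝ (Fin 2))) = {A, B} := by
      rw [h]; simp [Set.insert_comm, Set.pair_comm]
    rw [this]; exact collinear_pair ℝ A B
  -- tangency equations
  have htAB := tangent_poly a b ha hb A B hABne tAB
  have htBC := tangent_poly a b ha hb B C hBCne tBC
  have htCA := tangent_poly a b ha hb C A hCAne tCA
  -- nondegeneracy
  have hWne : ((B 0 - A 0) * (C 1 - A 1) - (B 1 - A 1) * (C 0 - A 0)) ≠ 0 := by
    intro h
    exact hncol (collinear_of_det_zero A B C h)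
  have hk0 : b^2*k^2 - (a^2-b^2)*(4*a^2-b^2) = 0 := by linear_combination hk
  -- main polynomial certificate (Brocard angle identity)
  have key : ((B 0 - A 0) * (C 1 - A 1) - (B 1 - A 1) * (C 0 - A 0)) * (b^2 * ((B 0 - A 0)^2 + (B 1 - A 1)^2 + (C 0 - B 0)^2 + (C 1 - B 1)^2 + (A 0 - C 0)^2 + (A 1 - C 1)^2)^2 - 4*(4*a^2 - b^2) * ((B 0 - A 0) * (C 1 - A 1) - (B 1 - A 1) * (C 0 - A 0))^2) = 0 := by
    linear_combination
      (16 * (B 1) ^ 2 * (C 0) * (C 1) ^ 3 + 16 * (B 1) ^ 4 * (C 0) * (C 1) - 16 * (B 0) * (B 1) * (C 1) ^ 4 - 16 * (B 0) * (B 1) ^ 3 * (C 1) ^ 2 + 16 * (A 1) ^ 2 * (B 1) ^ 2 * (C 0) * (C 1) - 16 * (A 1) ^ 2 * (B 0) * (B 1) * (C 1) ^ 2 + 16 * k * (B 1) * (C 0) * (C 1) ^ 3 + 16 * k * (B 1) ^ 2 * (C 0) * (C 1) ^ 2 + 32 * k * (B 1) ^ 3 * (C 0) * (C 1) - 32 *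 k * (B 0) * (B 1) * (C 1) ^ 3 - 16 * k * (B 0) * (B 1) ^ 2 * (C 1) ^ 2 - 16 * k * (B 0) * (B 1) ^ 3 * (C 1) + 32 * k * (A 1) ^ 2 * (B 1) * (C 0) * (C 1) - 32 * k * (A 1) ^ 2 * (B 0) * (B 1) * (C 1) - 16 * k * (A 0) * (A 1) * (B 1) * (C 1) ^ 2 + 16 * k * (A 0) * (A 1) * (B 1) ^ 2 * (C 1) + 8 * b ^ 2 * (C 0) * (C 1) ^ 3 + 8 * b ^ 2 * (C 0) ^ 3 * (C 1) - 20 * b ^ 2 * (B 1) * (C 0) * (C 1) ^ 2 - 20 * b ^ 2 * (B 1) * (C 0) ^ 3 + 16 * b ^ 2 * (B 1) ^ 2 * (C 0) * (C 1) - 28 * b ^ 2 * (B 1) ^ 3 * (C 0) + 28 * b ^ 2 * (B 0) * (C 1) ^ 3 + 12 * b ^ 2 * (B 0) * (C 0) ^ 2 * (C 1) - 16 * b ^ 2 * (B 0) * (B 1) * (C 1) ^ 2 + 20 * b ^ 2 * (B 0) * (B 1) ^ 2 * (C 1) - 8 * b ^ 2 * (B 0) * (B 1) ^ 3 - 12 *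 b ^ 2 * (B 0) ^ 2 * (B 1) * (C 0) + 20 * b ^ 2 * (B 0) ^ 3 * (C 1) - 8 * b ^ 2 * (B 0) ^ 3 * (B 1) + 12 * b ^ 2 * (A 1) * (C 0) * (C 1) ^ 2 + 12 * b ^ 2 * (A 1) * (C 0) ^ 3 + 8 * b ^ 2 * (A 1) * (B 1) * (C 0) * (C 1) - 8 * b ^ 2 * (A 1) * (B 1) ^ 2 * (C 0) + 8 * b ^ 2 * (A 1) * (B 0) * (C 1) ^ 2 - 8 * b ^ 2 * (A 1) * (B 0) * (B 1) * (C 1) - 12 * b ^ 2 * (A 1) * (B 0) * (B 1) ^ 2 - 12 * b ^ 2 * (A 1) * (B 0) ^ 3 + 8 * b ^ 2 * (A 1) ^ 2 * (C 0) * (C 1) - 12 * b ^ 2 * (A 1) ^ 2 * (B 1) * (C 0) + 12 * b ^ 2 * (A 1) ^ 2 * (B 0) * (C 1) - 8 * b ^ 2 * (A 1) ^ 2 * (B 0) * (B 1) + 4 * b ^ 2 * (A 1) ^ 3 * (C 0) - 4 * b ^ 2 * (A 1) ^ 3 * (B 0) - 8 * b ^ 2 * (A 0) * (B 1) * (C 1)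 ^ 2 + 8 * b ^ 2 * (A 0) * (B 1) ^ 2 * (C 1) - 8 * b ^ 2 * (A 0) * (B 0) * (C 0) * (C 1) + 8 * b ^ 2 * (A 0) * (B 0) * (B 1) * (C 0) - 4 * b ^ 2 * (A 0) * (A 1) ^ 2 * (C 1) + 4 * b ^ 2 * (A 0) * (A 1) ^ 2 * (B 1) + 8 * b ^ 2 * (A 0) ^ 2 * (C 0) * (C 1) - 12 * b ^ 2 * (A 0) ^ 2 * (B 1) * (C 0) + 12 * b ^ 2 * (A 0) ^ 2 * (B 0) * (C 1) - 8 * b ^ 2 * (A 0) ^ 2 * (B 0) * (B 1) + 4 * b ^ 2 * (A 0) ^ 2 * (A 1) * (C 0) - 4 * b ^ 2 * (A 0) ^ 2 * (A 1) * (B 0) - 4 * b ^ 2 * (A 0) ^ 3 * (C 1) + 4 * b ^ 2 * (A 0) ^ 3 * (B 1) - 48 * b ^ 2 * k * (B 1) * (C 0) * (C 1) - 48 * b ^ 2 * k * (B 1) ^ 2 * (C 0) + 48 * b ^ 2 * k * (B 0) * (C 1) ^ 2 + 48 * b ^ 2 * k * (B 0) * (B 1) * (C 1) + 16 * b ^ 2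 * k * (A 1) * (C 0) * (C 1) - 32 * b ^ 2 * k * (A 1) * (B 1) * (C 0) + 32 * b ^ 2 * k * (A 1) * (B 0) * (C 1) - 16 * b ^ 2 * k * (A 1) * (B 0) * (B 1) - 8 * b ^ 2 * k * (A 1) ^ 2 * (C 0) + 8 * b ^ 2 * k * (A 1) ^ 2 * (B 0) + 8 * b ^ 2 * k * (A 0) * (C 1) ^ 2 - 8 * b ^ 2 * k * (A 0) * (B 1) ^ 2 + 8 * b ^ 2 * k * (A 0) * (A 1) * (C 1) - 8 * b ^ 2 * k * (A 0) * (A 1) * (B 1) - 8 * b ^ 4 * (C 0) * (C 1) - 36 * b ^ 4 * (B 1) * (C 0) + 36 * b ^ 4 * (B 0) * (C 1) + 8 * b ^ 4 * (B 0) * (B 1) - 16 * b ^ 4 * (A 1) * (C 0) + 16 * b ^ 4 * (A 1) * (B 0) + 20 * b ^ 4 * (A 0) * (C 1) - 20 * b ^ 4 * (A 0) * (B 1) - 32 * a ^ 2 * (C 0) * (C 1) ^ 3 - 16 * a ^ 2 * (B 1) * (C 0) * (C 1) ^ 2 - 96 * a ^ 2 * (B 1) ^ 2 * (C 0) * (C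 1) + 96 * a ^ 2 * (B 0) * (B 1) * (C 1) ^ 2 + 16 * a ^ 2 * (B 0) * (B 1) ^ 2 * (C 1) + 32 * a ^ 2 * (B 0) * (B 1) ^ 3 - 32 * a ^ 2 * (A 1) * (B 1) * (C 0) * (C 1) + 32 * a ^ 2 * (A 1) * (B 0) * (B 1) * (C 1) - 64 * a ^ 2 * (A 1) ^ 2 * (C 0) * (C 1) + 64 * a ^ 2 * (A 1) ^ 2 * (B 0) * (B 1) + 16 * a ^ 2 * (A 0) * (B 1) * (C 1) ^ 2 - 16 * a ^ 2 * (A 0) * (B 1) ^ 2 * (C 1) + 32 * a ^ 2 * (A 0) * (A 1) * (C 1) ^ 2 - 32 * a ^ 2 * (A 0) * (A 1) * (B 1) ^ 2 + 40 * a ^ 2 * b ^ 2 * (C 0) * (C 1) + 180 * a ^ 2 * b ^ 2 * (B 1) * (C 0) - 180 * a ^ 2 * b ^ 2 * (B 0) * (C 1) - 40 * a ^ 2 * b ^ 2 * (B 0) * (B 1) + 80 * a ^ 2 * b ^ 2 * (A 1) * (C 0) - 80 * a ^ 2 * b ^ 2 * (A 1) * (B 0) - 100 * a ^ 2 * b ^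 2 * (A 0) * (C 1) + 100 * a ^ 2 * b ^ 2 * (A 0) * (B 1)) * hgA +
      (-16 * (A 1) ^ 2 * (C 0) * (C 1) ^ 3 - 16 * (A 1) ^ 2 * (B 1) ^ 2 * (C 0) * (C 1) - 16 * (A 1) ^ 4 * (C 0) * (C 1) + 16 * (A 0) * (A 1) * (C 1) ^ 4 + 16 * (A 0) * (A 1) * (B 1) ^ 2 * (C 1) ^ 2 + 16 * (A 0) * (A 1) ^ 3 * (C 1) ^ 2 - 16 * k * (A 1) * (C 0) * (C 1) ^ 3 - 32 * k * (A 1) * (B 1) ^ 2 * (C 0) * (C 1) + 16 * k * (A 1) * (B 0) * (B 1) * (C 1) ^ 2 - 16 * k * (A 1) ^ 2 * (C 0) * (C 1) ^ 2 - 16 * k * (A 1) ^ 2 * (B 0) * (B 1) * (C 1) - 32 * k * (A 1) ^ 3 * (C 0) * (C 1) + 32 * k * (A 0) * (A 1) * (C 1) ^ 3 + 32 * k * (A 0) * (A 1) * (B 1) ^ 2 * (C 1) + 16 * k * (A 0) * (A 1) ^ 2 * (C 1) ^ 2 + 16 * k * (A 0) * (A 1) ^ 3 * (C 1) - 8 *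 b ^ 2 * (C 0) * (C 1) ^ 3 - 8 * b ^ 2 * (C 0) ^ 3 * (C 1) - 12 * b ^ 2 * (B 1) * (C 0) * (C 1) ^ 2 - 12 * b ^ 2 * (B 1) * (C 0) ^ 3 - 8 * b ^ 2 * (B 1) ^ 2 * (C 0) * (C 1) - 4 * b ^ 2 * (B 1) ^ 3 * (C 0) + 4 * b ^ 2 * (B 0) * (B 1) ^ 2 * (C 1) - 8 * b ^ 2 * (B 0) ^ 2 * (C 0) * (C 1) - 4 * b ^ 2 * (B 0) ^ 2 * (B 1) * (C 0) + 4 * b ^ 2 * (B 0) ^ 3 * (C 1) + 20 * b ^ 2 * (A 1) * (C 0) * (C 1) ^ 2 + 20 * b ^ 2 * (A 1) * (C 0) ^ 3 - 8 * b ^ 2 * (A 1) * (B 1) * (C 0) * (C 1) + 12 * b ^ 2 * (A 1) * (B 1) ^ 2 * (C 0) + 8 * b ^ 2 * (A 1) * (B 0) * (C 1) ^ 2 - 4 * b ^ 2 * (A 1) * (B 0) * (B 1) ^ 2 + 12 * b ^ 2 * (A 1) * (B 0) ^ 2 * (C 0) - 4 * b ^ 2 * (A 1) * (B 0) ^ 3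 - 16 * b ^ 2 * (A 1) ^ 2 * (C 0) * (C 1) + 8 * b ^ 2 * (A 1) ^ 2 * (B 1) * (C 0) - 8 * b ^ 2 * (A 1) ^ 2 * (B 0) * (C 1) + 28 * b ^ 2 * (A 1) ^ 3 * (C 0) - 28 * b ^ 2 * (A 0) * (C 1) ^ 3 - 12 * b ^ 2 * (A 0) * (C 0) ^ 2 * (C 1) - 8 * b ^ 2 * (A 0) * (B 1) * (C 1) ^ 2 - 12 * b ^ 2 * (A 0) * (B 1) ^ 2 * (C 1) + 4 * b ^ 2 * (A 0) * (B 1) ^ 3 + 8 * b ^ 2 * (A 0) * (B 0) * (C 0) * (C 1) - 12 * b ^ 2 * (A 0) * (B 0) ^ 2 * (C 1) + 4 * b ^ 2 * (A 0) * (B 0) ^ 2 * (B 1) + 16 * b ^ 2 * (A 0) * (A 1) * (C 1) ^ 2 + 8 * b ^ 2 * (A 0) * (A 1) * (B 1) * (C 1) + 8 * b ^ 2 * (A 0) * (A 1) * (B 1) ^ 2 - 8 * b ^ 2 * (A 0) * (A 1) * (B 0) * (C 0) + 8 * b ^ 2 * (A 0) * (A 1) * (B 0) ^ 2 - 20 *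 b ^ 2 * (A 0) * (A 1) ^ 2 * (C 1) + 12 * b ^ 2 * (A 0) * (A 1) ^ 2 * (B 1) + 8 * b ^ 2 * (A 0) * (A 1) ^ 3 + 12 * b ^ 2 * (A 0) ^ 2 * (A 1) * (C 0) - 20 * b ^ 2 * (A 0) ^ 3 * (C 1) + 12 * b ^ 2 * (A 0) ^ 3 * (B 1) + 8 * b ^ 2 * (A 0) ^ 3 * (A 1) - 16 * b ^ 2 * k * (B 1) * (C 0) * (C 1) + 8 * b ^ 2 * k * (B 1) ^ 2 * (C 0) - 8 * b ^ 2 * k * (B 0) * (C 1) ^ 2 - 8 * b ^ 2 * k * (B 0) * (B 1) * (C 1) + 48 * b ^ 2 * k * (A 1) * (C 0) * (C 1) + 32 * b ^ 2 * k * (A 1) * (B 1) * (C 0) + 8 * b ^ 2 * k * (A 1) * (B 0) * (B 1) + 48 * b ^ 2 * k * (A 1) ^ 2 * (C 0) + 8 * b ^ 2 * k * (A 1) ^ 2 * (B 0) - 48 * b ^ 2 * k * (A 0) * (C 1) ^ 2 - 32 * b ^ 2 * k * (A 0) * (B 1) * (C 1) - 8 * b ^ 2 * k * (A 0) * (B 1)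 ^ 2 - 48 * b ^ 2 * k * (A 0) * (A 1) * (C 1) + 16 * b ^ 2 * k * (A 0) * (A 1) * (B 1) + 8 * b ^ 4 * (C 0) * (C 1) + 16 * b ^ 4 * (B 1) * (C 0) - 20 * b ^ 4 * (B 0) * (C 1) + 36 * b ^ 4 * (A 1) * (C 0) + 20 * b ^ 4 * (A 1) * (B 0) - 36 * b ^ 4 * (A 0) * (C 1) - 16 * b ^ 4 * (A 0) * (B 1) - 8 * b ^ 4 * (A 0) * (A 1) + 32 * a ^ 2 * (C 0) * (C 1) ^ 3 + 64 * a ^ 2 * (B 1) ^ 2 * (C 0) * (C 1) - 32 * a ^ 2 * (B 0) * (B 1) * (C 1) ^ 2 + 16 * a ^ 2 * (A 1) * (C 0) * (C 1) ^ 2 + 32 * a ^ 2 * (A 1) * (B 1) * (C 0) * (C 1) - 16 * a ^ 2 * (A 1) * (B 0) * (C 1) ^ 2 + 96 * a ^ 2 * (A 1) ^ 2 * (C 0) * (C 1) + 16 * a ^ 2 * (A 1) ^ 2 * (B 0) * (C 1) + 32 * a ^ 2 * (A 1) ^ 2 * (B 0) * (B 1) - 96 * a ^ 2 * (A 0) *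 (A 1) * (C 1) ^ 2 - 32 * a ^ 2 * (A 0) * (A 1) * (B 1) * (C 1) - 64 * a ^ 2 * (A 0) * (A 1) * (B 1) ^ 2 - 16 * a ^ 2 * (A 0) * (A 1) ^ 2 * (C 1) - 32 * a ^ 2 * (A 0) * (A 1) ^ 3 - 40 * a ^ 2 * b ^ 2 * (C 0) * (C 1) - 80 * a ^ 2 * b ^ 2 * (B 1) * (C 0) + 100 * a ^ 2 * b ^ 2 * (B 0) * (C 1) - 180 * a ^ 2 * b ^ 2 * (A 1) * (C 0) - 100 * a ^ 2 * b ^ 2 * (A 1) * (B 0) + 180 * a ^ 2 * b ^ 2 * (A 0) * (C 1) + 80 * a ^ 2 * b ^ 2 * (A 0) * (B 1) + 40 * a ^ 2 * b ^ 2 * (A 0) * (A 1)) * hgB +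
      (16 * (A 1) ^ 2 * (B 0) * (B 1) * (C 1) ^ 2 + 16 * (A 1) ^ 2 * (B 0) * (B 1) ^ 3 + 16 * (A 1) ^ 4 * (B 0) * (B 1) - 16 * (A 0) * (A 1) * (B 1) ^ 2 * (C 1) ^ 2 - 16 * (A 0) * (A 1) * (B 1) ^ 4 - 16 * (A 0) * (A 1) ^ 3 * (B 1) ^ 2 - 16 * k * (A 1) * (B 1) ^ 2 * (C 0) * (C 1) + 32 * k * (A 1) * (B 0) * (B 1) * (C 1) ^ 2 + 16 * k * (A 1) * (B 0) * (B 1) ^ 3 + 16 * k * (A 1) ^ 2 * (B 1) * (C 0) * (C 1) + 16 * k * (A 1) ^ 2 * (B 0) * (B 1) ^ 2 + 32 * k * (A 1) ^ 3 * (B 0) * (B 1) - 32 * k * (A 0) * (A 1) * (B 1) * (C 1) ^ 2 - 32 * k * (A 0) * (A 1) * (B 1) ^ 3 - 16 * k * (A 0) * (A 1) ^ 2 * (B 1) ^ 2 - 16 * k * (A 0) * (A 1) ^ 3 * (B 1) - 4 * b ^ 2 * (B 1) * (C 0) * (C 1) ^ 2 - 4 * b ^ 2 * (B 1) * (C 0)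 ^ 3 + 4 * b ^ 2 * (B 0) * (C 1) ^ 3 + 4 * b ^ 2 * (B 0) * (C 0) ^ 2 * (C 1) + 8 * b ^ 2 * (B 0) * (B 1) * (C 1) ^ 2 + 8 * b ^ 2 * (B 0) * (B 1) * (C 0) ^ 2 + 12 * b ^ 2 * (B 0) * (B 1) ^ 2 * (C 1) + 8 * b ^ 2 * (B 0) * (B 1) ^ 3 + 12 * b ^ 2 * (B 0) ^ 3 * (C 1) + 8 * b ^ 2 * (B 0) ^ 3 * (B 1) + 4 * b ^ 2 * (A 1) * (C 0) * (C 1) ^ 2 + 4 * b ^ 2 * (A 1) * (C 0) ^ 3 - 8 * b ^ 2 * (A 1) * (B 1) ^ 2 * (C 0) - 12 * b ^ 2 * (A 1) * (B 0) * (C 1) ^ 2 - 12 * b ^ 2 * (A 1) * (B 0) * (C 0) ^ 2 + 8 * b ^ 2 * (A 1) * (B 0) * (B 1) * (C 1) - 20 * b ^ 2 * (A 1) * (B 0) * (B 1) ^ 2 - 20 * b ^ 2 * (A 1) * (B 0) ^ 3 + 8 * b ^ 2 * (A 1) ^ 2 * (B 1) * (C 0) - 8 * b ^ 2 * (A 1)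 ^ 2 * (B 0) * (C 1) + 16 * b ^ 2 * (A 1) ^ 2 * (B 0) * (B 1) - 28 * b ^ 2 * (A 1) ^ 3 * (B 0) - 4 * b ^ 2 * (A 0) * (C 1) ^ 3 - 4 * b ^ 2 * (A 0) * (C 0) ^ 2 * (C 1) + 12 * b ^ 2 * (A 0) * (B 1) * (C 1) ^ 2 + 12 * b ^ 2 * (A 0) * (B 1) * (C 0) ^ 2 + 8 * b ^ 2 * (A 0) * (B 1) ^ 2 * (C 1) + 28 * b ^ 2 * (A 0) * (B 1) ^ 3 - 8 * b ^ 2 * (A 0) * (B 0) * (B 1) * (C 0) + 12 * b ^ 2 * (A 0) * (B 0) ^ 2 * (B 1) - 8 * b ^ 2 * (A 0) * (A 1) * (C 1) ^ 2 - 8 * b ^ 2 * (A 0) * (A 1) * (C 0) ^ 2 - 8 * b ^ 2 * (A 0) * (A 1) * (B 1) * (C 1) - 16 * b ^ 2 * (A 0) * (A 1) * (B 1) ^ 2 + 8 * b ^ 2 * (A 0) * (A 1) * (B 0) * (C 0) - 12 * b ^ 2 * (A 0) * (A 1) ^ 2 * (C 1) + 20 * b ^ 2 * (A 0) * (A 1)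 ^ 2 * (B 1) - 8 * b ^ 2 * (A 0) * (A 1) ^ 3 - 12 * b ^ 2 * (A 0) ^ 2 * (A 1) * (B 0) - 12 * b ^ 2 * (A 0) ^ 3 * (C 1) + 20 * b ^ 2 * (A 0) ^ 3 * (B 1) - 8 * b ^ 2 * (A 0) ^ 3 * (A 1) + 8 * b ^ 2 * k * (B 1) * (C 0) * (C 1) + 8 * b ^ 2 * k * (B 1) ^ 2 * (C 0) - 8 * b ^ 2 * k * (B 0) * (C 1) ^ 2 + 16 * b ^ 2 * k * (B 0) * (B 1) * (C 1) - 8 * b ^ 2 * k * (A 1) * (C 0) * (C 1) - 32 * b ^ 2 * k * (A 1) * (B 0) * (C 1) - 48 * b ^ 2 * k * (A 1) * (B 0) * (B 1) - 8 * b ^ 2 * k * (A 1) ^ 2 * (C 0) - 48 * b ^ 2 * k * (A 1) ^ 2 * (B 0) + 8 * b ^ 2 * k * (A 0) * (C 1) ^ 2 + 32 * b ^ 2 * k * (A 0) * (B 1) * (C 1) + 48 * b ^ 2 * k * (A 0) * (B 1) ^ 2 - 16 * b ^ 2 * k * (A 0) * (A 1) * (C 1) + 48 * b ^ 2 * k *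 (A 0) * (A 1) * (B 1) + 20 * b ^ 4 * (B 1) * (C 0) - 16 * b ^ 4 * (B 0) * (C 1) - 8 * b ^ 4 * (B 0) * (B 1) - 20 * b ^ 4 * (A 1) * (C 0) - 36 * b ^ 4 * (A 1) * (B 0) + 16 * b ^ 4 * (A 0) * (C 1) + 36 * b ^ 4 * (A 0) * (B 1) + 8 * b ^ 4 * (A 0) * (A 1) + 32 * a ^ 2 * (B 1) ^ 2 * (C 0) * (C 1) - 64 * a ^ 2 * (B 0) * (B 1) * (C 1) ^ 2 - 32 * a ^ 2 * (B 0) * (B 1) ^ 3 + 16 * a ^ 2 * (A 1) * (B 1) ^ 2 * (C 0) - 32 * a ^ 2 * (A 1) * (B 0) * (B 1) * (C 1) - 16 * a ^ 2 * (A 1) * (B 0) * (B 1) ^ 2 - 32 * a ^ 2 * (A 1) ^ 2 * (C 0) * (C 1) - 16 * a ^ 2 * (A 1) ^ 2 * (B 1) * (C 0) - 96 * a ^ 2 * (A 1) ^ 2 * (B 0) * (B 1) + 64 * a ^ 2 * (A 0) * (A 1) * (C 1) ^ 2 + 32 * a ^ 2 * (A 0) * (A 1) * (B 1) * (C 1)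 + 96 * a ^ 2 * (A 0) * (A 1) * (B 1) ^ 2 + 16 * a ^ 2 * (A 0) * (A 1) ^ 2 * (B 1) + 32 * a ^ 2 * (A 0) * (A 1) ^ 3 - 100 * a ^ 2 * b ^ 2 * (B 1) * (C 0) + 80 * a ^ 2 * b ^ 2 * (B 0) * (C 1) + 40 * a ^ 2 * b ^ 2 * (B 0) * (B 1) + 100 * a ^ 2 * b ^ 2 * (A 1) * (C 0) + 180 * a ^ 2 * b ^ 2 * (A 1) * (B 0) - 80 * a ^ 2 * b ^ 2 * (A 0) * (C 1) - 180 * a ^ 2 * b ^ 2 * (A 0) * (B 1) - 40 * a ^ 2 * b ^ 2 * (A 0) * (A 1)) * hgC +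
      (16 * (B 1) ^ 2 * (C 0) * (C 1) - 16 * (B 0) * (B 1) * (C 1) ^ 2 - 16 * (A 1) ^ 2 * (C 0) * (C 1) + 16 * (A 0) * (A 1) * (C 1) ^ 2 + 32 * k * (B 1) * (C 0) * (C 1) - 16 * k * (B 0) * (C 1) ^ 2 - 16 * k * (B 0) * (B 1) * (C 1) - 32 * k * (A 1) * (C 0) * (C 1) + 16 * k * (A 0) * (C 1) ^ 2 + 16 * k * (A 0) * (A 1) * (C 1) - 16 * b ^ 2 * (B 0) * (C 1) + 16 * b ^ 2 * (A 0) * (C 1) - 48 * a ^ 2 * (B 1) * (C 0) + 64 * a ^ 2 * (B 0) * (C 1) + 32 * a ^ 2 * (B 0) * (B 1) + 48 * a ^ 2 * (A 1) * (C 0) - 16 * a ^ 2 * (A 1) * (B 0) - 64 * a ^ 2 * (A 0) * (C 1) + 16 * a ^ 2 * (A 0) * (B 1) - 32 * a ^ 2 * (A 0) * (A 1)) * htAB +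
      (-16 * (A 1) ^ 2 * (C 0) * (C 1) + 16 * (A 1) ^ 2 * (B 0) * (B 1) + 16 * (A 0) * (A 1) * (C 1) ^ 2 - 16 * (A 0) * (A 1) * (B 1) ^ 2 - 16 * k * (A 1) * (C 0) * (C 1) + 16 * k * (A 1) * (B 0) * (B 1) - 16 * k * (A 1) ^ 2 * (C 0) + 16 * k * (A 1) ^ 2 * (B 0) + 32 * k * (A 0) * (A 1) * (C 1) - 32 * k * (A 0) * (A 1) * (B 1) - 16 * b ^ 2 * (A 1) * (C 0) + 16 * b ^ 2 * (A 1) * (B 0) + 32 * a ^ 2 * (C 0) * (C 1) - 16 * a ^ 2 * (B 1) * (C 0) + 16 * a ^ 2 * (B 0) * (C 1) - 32 * a ^ 2 * (B 0) * (B 1) + 64 * a ^ 2 * (A 1) * (C 0) - 64 * a ^ 2 * (A 1) * (B 0) - 48 * a ^ 2 * (A 0) * (C 1) + 48 * a ^ 2 * (A 0) * (B 1)) * htBC +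
      (16 * (B 1) ^ 2 * (C 0) * (C 1) - 16 * (B 0) * (B 1) * (C 1) ^ 2 + 16 * (A 1) ^ 2 * (B 0) * (B 1) - 16 * (A 0) * (A 1) * (B 1) ^ 2 + 16 * k * (B 1) * (C 0) * (C 1) + 16 * k * (B 1) ^ 2 * (C 0) - 32 * k * (B 0) * (B 1) * (C 1) + 32 * k * (A 1) * (B 0) * (B 1) - 16 * k * (A 0) * (B 1) ^ 2 - 16 * k * (A 0) * (A 1) * (B 1) + 16 * b ^ 2 * (B 1) * (C 0) - 16 * b ^ 2 * (A 0) * (B 1) - 32 * a ^ 2 * (C 0) * (C 1) - 64 * a ^ 2 * (B 1) * (C 0) + 48 * a ^ 2 * (B 0) * (C 1) + 16 * a ^ 2 * (A 1) * (C 0) - 48 * a ^ 2 * (A 1) * (B 0) - 16 * a ^ 2 * (A 0) * (C 1) + 64 * a ^ 2 * (A 0) * (B 1) + 32 * a ^ 2 * (A 0) * (A 1)) * htCA +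
      (-16 * (B 1) * (C 0) * (C 1) ^ 2 + 16 * (B 1) ^ 2 * (C 0) * (C 1) - 16 * (B 1) ^ 3 * (C 0) + 16 * (B 0) * (C 1) ^ 3 - 16 * (B 0) * (B 1) * (C 1) ^ 2 + 16 * (B 0) * (B 1) ^ 2 * (C 1) + 16 * (A 1) * (C 0) * (C 1) ^ 2 + 32 * (A 1) * (B 1) ^ 2 * (C 0) - 32 * (A 1) * (B 0) * (C 1) ^ 2 - 16 * (A 1) * (B 0) * (B 1) ^ 2 - 16 * (A 1) ^ 2 * (C 0) * (C 1) - 32 * (A 1) ^ 2 * (B 1) * (C 0) + 32 * (A 1) ^ 2 * (B 0) * (C 1) + 16 * (A 1) ^ 2 * (B 0) * (B 1) + 16 * (A 1) ^ 3 * (C 0) - 16 * (A 1) ^ 3 * (B 0) - 16 * (A 0) * (C 1) ^ 3 + 32 * (A 0) * (B 1) * (C 1) ^ 2 - 32 * (A 0) * (B 1) ^ 2 * (C 1) + 16 * (A 0) * (B 1) ^ 3 + 16 * (A 0) * (A 1) * (C 1) ^ 2 - 16 * (A 0) * (A 1) * (B 1) ^ 2 - 16 * (A 0) * (A 1) ^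 2 * (C 1) + 16 * (A 0) * (A 1) ^ 2 * (B 1)) * hk
  have hmain : b^2 * ((B 0 - A 0)^2 + (B 1 - A 1)^2 + (C 0 - B 0)^2 + (C 1 - B 1)^2 + (A 0 - C 0)^2 + (A 1 - C 1)^2)^2 = 4*(4*a^2 - b^2) * ((B 0 - A 0) * (C 1 - A 1) - (B 1 - A 1) * (C 0 - A 0))^2 := by
    rcases mul_eq_zero.mp key with h | h
    · exact absurd h hWne
    · linarith
  -- centroid relations
  have hG0 : G 0 = (A 0 + B 0 + C 0)/3 := by rw [hG]; simp [PiLp.smul_apply, PiLp.add_apply]; ring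
  have hG1 : G 1 = (A 1 + B 1 + C 1)/3 := by rw [hG]; simp [PiLp.smul_apply, PiLp.add_apply]; ring
  have hsum0 : (A 0 - G 0) + (B 0 - G 0) + (C 0 - G 0) = 0 := by rw [hG0]; ring
  have hsum1 : (A 1 - G 1) + (B 1 - G 1) + (C 1 - G 1) = 0 := by rw [hG1]; ring
  have hW3 : ((B 0 - A 0) * (C 1 - A 1) - (B 1 - A 1) * (C 0 - A 0)) = 3 * ((A 0 - G 0) * (B 1 - G 1) - (A 1 - G 1) * (B 0 - G 0)) := by linear_combination (-((B 1 - G 1) - (A 1 - G 1))) * hsum0 + ((B 0 - G 0) - (A 0 - G 0)) * hsum1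
  have hs36 : ((B 0 - A 0)^2 + (B 1 - A 1)^2 + (C 0 - B 0)^2 + (C 1 - B 1)^2 + (A 0 - C 0)^2 + (A 1 - C 1)^2) = 6 * ((A 0 - G 0)^2 + (A 1 - G 1)^2 + (B 0 - G 0)^2 + (B 1 - G 1)^2 + (A 0 - G 0) * (B 0 - G 0) + (A 1 - G 1) * (B 1 - G 1)) := by
    linear_combination (2*((C 0 - G 0) - 2*(A 0 - G 0) - 2*(B 0 - G 0))) * hsum0 + (2*((C 1 - G 1) - 2*(A 1 - G 1) - 2*(B 1 - G 1))) * hsum1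
  have hS2w : b^2 * ((A 0 - G 0)^2 + (A 1 - G 1)^2 + (B 0 - G 0)^2 + (B 1 - G 1)^2 + (A 0 - G 0) * (B 0 - G 0) + (A 1 - G 1) * (B 1 - G 1))^2 = (4*a^2 - b^2) * ((A 0 - G 0) * (B 1 - G 1) - (A 1 - G 1) * (B 0 - G 0))^2 := by
    rw [hs36, hW3] at hmain
    linarith
  clear key hmain hs36
  have hwne : ((A 0 - G 0) * (B 1 - G 1) - (A 1 - G 1) * (B 0 - G 0)) ≠ 0 := by
    intro h
    apply hWne
    rw [hW3, h]; ring
  -- Steiner ellipse equations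
  have hinner : ∀ X Z : EuclideanSpace ℝ (Fin 2), ⟪X - G, Z⟫ = (X 0 - G 0) * Z 0 + (X 1 - G 1) * Z 1 := by
    intro X Z
    simp [PiLp.inner_apply, Fin.sum_univ_two, PiLp.sub_apply]; ring
  have hSA := hSteiner A (by simp)
  have hSB := hSteiner B (by simp)
  have hSC := hSteiner C (by simp)
  rw [hinner A u, hinner A v] at hSA
  rw [hinner B u, hinner B v] at hSB
  rw [hinner C u, hinner C v] at hSC
  have hnu : (u 0)^2 + (u 1)^2 = 1 := by
    have h := real_inner_self_eq_norm_sq u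
    rw [hu, PiLp.inner_apply, Fin.sum_univ_two] at h
    simp only [RCLike.inner_apply, conj_trivial] at h
    linear_combination h
  have hnv : (v 0)^2 + (v 1)^2 = 1 := by
    have h := real_inner_self_eq_norm_sq v
    rw [hv, PiLp.inner_apply, Fin.sum_univ_two] at h
    simp only [RCLike.inner_apply, conj_trivial] at h
    linear_combination h
  have huv' : u 0 * v 0 + u 1 * v 1 = 0 := by
    have h := huv
    simp [PiLp.inner_apply, Fin.sum_univ_two] at h
    linear_combination h
  have horth : (u 0 * v 1 - u 1 * v 0)^2 = 1 := by
    linear_combination ((v 0)^2 + (v 1)^2) * hnu + hnv - (u 0 * v 0 + u 1 * v 1) * huv'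
  -- bilinear value
  have hBxy : (((A 0 - G 0) * u 0 + (A 1 - G 1) * u 1) * ((B 0 - G 0) * u 0 + (B 1 - G 1) * u 1) / p^2 + ((A 0 - G 0) * v 0 + (A 1 - G 1) * v 1) * ((B 0 - G 0) * v 0 + (B 1 - G 1) * v 1) / q^2) = -(1/2) := by
    linear_combination (1/2) * hSC - (1/2) * hSA - (1/2) * hSB
      - (1/2) * ((((C 0 - G 0) * u 0 + (C 1 - G 1) * u 1) + ((-(A 0 - G 0) - (B 0 - G 0)) * u 0 + (-(A 1 - G 1) - (B 1 - G 1)) * u 1)) * u 0 / p^2 + (((C 0 - G 0) * v 0 + (C 1 - G 1) * v 1) + ((-(A 0 - G 0) - (B 0 - G 0)) * v 0 + (-(A 1 - G 1) - (B 1 - G 1)) * v 1)) * v 0 / q^2) * hsum0 - (1/2) * ((((C 0 - G 0) * u 0 + (C 1 - G 1) * u 1) + ((-(A 0 - G 0) - (B 0 - G 0)) * u 0 + (-(A 1 - G 1) - (B 1 - G 1)) * u 1)) * u 1 / p^2 + (((C 0 - G 0) * v 0 + (C 1 - G 1) * v 1) + ((-(A 0 - G 0) - (B 0 - G 0)) *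 v 0 + (-(A 1 - G 1) - (B 1 - G 1)) * v 1)) * v 1 / q^2) * hsum1
  have hp : (0:ℝ) < p := lt_of_lt_of_le hq hpq
  have hp2 : (p:ℝ)^2 ≠ 0 := by positivity
  have hq2 : (q:ℝ)^2 ≠ 0 := by positivity
  have F1 : (1/p^2) * (1/q^2) * ((A 0 - G 0) * (B 1 - G 1) - (A 1 - G 1) * (B 0 - G 0))^2 = 3/4 := by
    linear_combination (-(1/p^2) * (1/q^2) * ((A 0 - G 0) * (B 1 - G 1) - (A 1 - G 1) * (B 0 - G 0))^2) * horth + (((B 0 - G 0) * u 0 + (B 1 - G 1) * u 1)^2 / p^2 + ((B 0 - G 0) * v 0 + (B 1 - G 1) * v 1)^2 / q^2) * hSA + hSB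
      - ((((A 0 - G 0) * u 0 + (A 1 - G 1) * u 1) * ((B 0 - G 0) * u 0 + (B 1 - G 1) * u 1) / p^2 + ((A 0 - G 0) * v 0 + (A 1 - G 1) * v 1) * ((B 0 - G 0) * v 0 + (B 1 - G 1) * v 1) / q^2) - 1/2) * hBxy
  have F2 : (1/p^2 + 1/q^2) * ((A 0 - G 0) * (B 1 - G 1) - (A 1 - G 1) * (B 0 - G 0))^2 = ((A 0 - G 0)^2 + (A 1 - G 1)^2 + (B 0 - G 0)^2 + (B 1 - G 1)^2 + (A 0 - G 0) * (B 0 - G 0) + (A 1 - G 1) * (B 1 - G 1)) := by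
    linear_combination (-(1/p^2) * ((A 0 - G 0) * (B 1 - G 1) - (A 1 - G 1) * (B 0 - G 0))^2) * hnu + (-(1/q^2) * ((A 0 - G 0) * (B 1 - G 1) - (A 1 - G 1) * (B 0 - G 0))^2) * hnv
      + ((B 0 - G 0)^2 + (B 1 - G 1)^2) * hSA + ((A 0 - G 0)^2 + (A 1 - G 1)^2) * hSB - 2*((A 0 - G 0)*(B 0 - G 0) + (A 1 - G 1)*(B 1 - G 1)) * hBxy
  -- eliminate w
  have hw2 : ((A 0 - G 0) * (B 1 - G 1) - (A 1 - G 1) * (B 0 - G 0))^2 = 3/4 * (p^2 * q^2) := by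
    have h := F1
    field_simp at h
    linarith
  have hS2val : ((A 0 - G 0)^2 + (A 1 - G 1)^2 + (B 0 - G 0)^2 + (B 1 - G 1)^2 + (A 0 - G 0) * (B 0 - G 0) + (A 1 - G 1) * (B 1 - G 1)) = 3/4 * (p^2 + q^2) := by
    rw [← F2, hw2]
    field_simp
    ring
  have hE0 : 3 * b^2 * (p^2 + q^2)^2 = 4 * (4*a^2 - b^2) * (p^2 * q^2) := by
    rw [hS2val, hw2] at hS2w
    linear_combination (16/3) * hS2w
  -- factor and conclude
  have hfac : ((δ₁ - 2*c)*p^2 - (δ₁ + 2*c)*q^2) * ((δ₁ + 2*c)*p^2 - (δ₁ - 2*c)*q^2) = 0 := by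
    linear_combination (p^4 + q^4 - 2*p^2*q^2) * hd2 - 4*(p^4 + q^4 + 2*p^2*q^2) * hc2 + hE0
  have hsumdc : (0:ℝ) < δ₁ + 2*c := by linarith
  have hdc : (0:ℝ) < δ₁ - 2*c := by
    have h3b : (δ₁ - 2*c) * (δ₁ + 2*c) = 3*b^2 := by linear_combination hd2 - 4*hc2
    have hrw : δ₁ - 2*c = 3*b^2 / (δ₁ + 2*c) := by
      rw [eq_div_iff hsumdc.ne']
      linear_combination h3b
    rw [hrw]
    positivity
  have hpq2 : q^2 ≤ p^2 := pow_le_pow_left₀ (le_of_lt hq) hpq 2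
  have hsec : (0:ℝ) < (δ₁ + 2*c)*p^2 - (δ₁ - 2*c)*q^2 := by
    have e : (δ₁ + 2*c)*p^2 - (δ₁ - 2*c)*q^2 = (δ₁ - 2*c)*(p^2 - q^2) + 4*c*p^2 := by ring
    rw [e]
    have t1 : (0:ℝ) ≤ (δ₁ - 2*c)*(p^2 - q^2) := mul_nonneg hdc.le (by linarith)
    have t2 : (0:ℝ) < 4*c*p^2 := by positivity
    linarith
  have hfirst : (δ₁ - 2*c)*p^2 = (δ₁ + 2*c)*q^2 := by
    rcases mul_eq_zero.mp hfac with h | h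
    · linarith [sub_eq_zero.mp h]
    · exact absurd h (ne_of_gt hsec)
  have hsqrtD : Real.sqrt (4*a^4 - 5*a^2*b^2 + b^4) = c * δ₁ := by
    rw [hc, hδ, ← Real.sqrt_mul (le_of_lt hab2)]
    congr 1
    ring
  rw [hsqrtD, div_eq_div_iff hq2 (by positivity : (0:ℝ) < 3*b^2).ne']
  linear_combination (δ₁ + 2*c) * hfirst - (p^2 - q^2) * hd2 + (4*p^2 + 4*q^2) * hc2
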